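/- The worst-case mean square regret of the rule δ_H* over Θ admits the following one-dimensional representation: sup_{(θ_e,θ_t)∈Θ} R_sq(δ_H*, θ_e, θ_t) = σ² · sup_{ã ≥ −k/σ} (ã + k/σ)² ρ*(ã). -/

import Mathlib

open Real MeasureTheory

/-- The standard normal density. -/
noncomputable def gaussPdf (x : ℝ) : ℝ :=
  (Real.sqrt (2 * Real.pi))⁻¹ * Real.exp (-(x ^ 2) / 2)

/-- ρ(a) = ∫ (1/(exp(2ay)+1))² φ(y−a) dy. -/
noncomputable def ρ (a : ℝ) : ℝ :=
  ∫ y : ℝ, (1 / (Real.exp (2 * a * y) + 1)) ^ 2 * gaussPdf (y - a)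

/-- Mean square regret in the two-dimensional partially identified problem:
data X ~ N(θ_e, σ²), target effect θ_t. -/
noncomputable def Rsq (σ : ℝ) (δ : ℝ → ℝ) (θe θt : ℝ) : ℝ :=
  θt ^ 2 *
    ∫ x : ℝ, ((if 0 ≤ θt then (1 : ℝ) else 0) - δ x) ^ 2 *
      (σ⁻¹ * gaussPdf ((x - θe) / σ))

/-- The parameter space Θ = {(θ_e, θ_t) : θ_e − k ≤ θ_t ≤ θ_e + k}. -/
def Θset (k : ℝ) : Set (ℝ × ℝ) := {p | p.1 - k ≤ p.2 ∧ p.2 ≤ p.1 + k}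

/-- ρ*(θ) = ∫ (1/(exp(2a*y)+1))² φ(y−θ) dy, the logistic weight frozen at a*. -/
noncomputable def ρstar (astar θ : ℝ) : ℝ :=
  ∫ y : ℝ, (1 / (Real.exp (2 * astar * y) + 1)) ^ 2 * gaussPdf (y - θ)

lemma gaussPdf_neg (x : ℝ) : gaussPdf (-x) = gaussPdf x := by
  simp [gaussPdf]

lemma ρstar_nonneg (astar θ : ℝ) : 0 ≤ ρstar astar θ := by
  apply integral_nonneg
  intro y
  have h2 : 0 ≤ gaussPdf (y - θ) := by
    unfold gaussPdf; positivity
  exact mul_nonneg (sq_nonneg _) h2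

lemma Rsq_pos_case (σ astar : ℝ) (hσ : 0 < σ) (δH : ℝ → ℝ)
    (hδH : ∀ x, δH x =
      Real.exp (2 * astar * x / σ) / (Real.exp (2 * astar * x / σ) + 1))
    (θe θt : ℝ) (hθt : 0 ≤ θt) :
    Rsq σ δH θe θt = θt ^ 2 * ρstar astar (θe / σ) := by
  unfold Rsq
  rw [if_pos hθt]
  congr 1
  have key : ∀ x : ℝ, ((1 : ℝ) - δH x) ^ 2 * (σ⁻¹ * gaussPdf ((x - θe) / σ))
      = σ⁻¹ * ((fun y => (1 / (Real.exp (2 * astar * y) + 1)) ^ 2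
          * gaussPdf (y - θe / σ)) (x / σ)) := by
    intro x
    have hepos : 0 < Real.exp (2 * astar * x / σ) + 1 := by positivity
    have h1 : (1 : ℝ) - δH x = 1 / (Real.exp (2 * astar * x / σ) + 1) := by
      rw [hδH x]; field_simp; ring
    have h2 : 2 * astar * (x / σ) = 2 * astar * x / σ := by ring
    have h3 : x / σ - θe / σ = (x - θe) / σ := by ring
    rw [h1]
    simp only [h2, h3]
    ring
  simp only [key]
  rw [integral_const_mul, MeasureTheory.Measure.integral_comp_div
    (fun y => (1 / (Real.exp (2 * astar * y) + 1)) ^ 2 * gaussPdf (y - θe / σ)) σ]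
  rw [abs_of_pos hσ, smul_eq_mul, ← mul_assoc, inv_mul_cancel₀ hσ.ne', one_mul]
  rfl

lemma Rsq_neg_case (σ astar : ℝ) (hσ : 0 < σ) (δH : ℝ → ℝ)
    (hδH : ∀ x, δH x =
      Real.exp (2 * astar * x / σ) / (Real.exp (2 * astar * x / σ) + 1))
    (θe θt : ℝ) (hθt : ¬ (0 ≤ θt)) :
    Rsq σ δH θe θt = θt ^ 2 * ρstar astar (-(θe / σ)) := by
  unfold Rsq
  rw [if_neg hθt]
  congr 1
  set h : ℝ → ℝ := fun y => (1 / (Real.exp (2 * astar * y) + 1)) ^ 2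
      * gaussPdf (y - -(θe / σ)) with hh
  have key : ∀ x : ℝ, ((0 : ℝ) - δH x) ^ 2 * (σ⁻¹ * gaussPdf ((x - θe) / σ))
      = σ⁻¹ * ((fun z => h (-z)) (x / σ)) := by
    intro x
    have he : (0 : ℝ) < Real.exp (2 * astar * x / σ) := Real.exp_pos _
    have h1 : ((0 : ℝ) - δH x) ^ 2
        = (1 / (Real.exp (2 * astar * -(x / σ)) + 1)) ^ 2 := by
      rw [hδH x]
      have h2 : 2 * astar * -(x / σ) = -(2 * astar * x / σ) := by ring
      rw [h2, Real.exp_neg]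
      have hepos : 0 < Real.exp (2 * astar * x / σ) + 1 := by positivity
      have hbase : (0 : ℝ) - Real.exp (2 * astar * x / σ) / (Real.exp (2 * astar * x / σ) + 1)
          = -(1 / ((Real.exp (2 * astar * x / σ))⁻¹ + 1)) := by
        rw [zero_sub, neg_inj]
        rw [div_eq_div_iff hepos.ne' (by positivity : ((Real.exp (2 * astar * x / σ))⁻¹ + 1) ≠ 0)]
        field_simp
        ring
      rw [hbase, neg_sq]
    have h4 : gaussPdf (-(x / σ) - -(θe / σ)) = gaussPdf ((x - θe) / σ) := by
      rw [show -(x / σ) - -(θe / σ) = -((x - θe) / σ) by ring, gaussPdf_neg]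
    simp only [hh, h1, h4]
    ring
  simp only [key]
  rw [integral_const_mul, MeasureTheory.Measure.integral_comp_div (fun z => h (-z)) σ]
  rw [abs_of_pos hσ, smul_eq_mul, ← mul_assoc, inv_mul_cancel₀ hσ.ne', one_mul]
  rw [MeasureTheory.integral_neg_eq_self h volume]
  rfl

/-- One-dimensional representation of the worst-case mean square regret of δ_H* over Θ:
it equals σ² · sup_{ã ≥ −k/σ} (ã + k/σ)² ρ*(ã). -/
theorem stmt_11 (σ k τstar astar : ℝ) (hσ : 0 < σ) (hk : 0 < k)
    (hτ0 : 0 ≤ τstar)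
    (hτmax : ∀ τ : ℝ, 0 ≤ τ → τ ^ 2 * ρ τ ≤ τstar ^ 2 * ρ τstar)
    (ha : astar ∈ Set.Icc 0 τstar)
    (hamax : ∀ a ∈ Set.Icc 0 τstar,
      (a + k / σ) ^ 2 * ρ a ≤ (astar + k / σ) ^ 2 * ρ astar)
    (δH : ℝ → ℝ)
    (hδH : ∀ x, δH x =
      Real.exp (2 * astar * x / σ) / (Real.exp (2 * astar * x / σ) + 1)) :
    (⨆ p : Θset k, Rsq σ δH p.1.1 p.1.2) =
      σ ^ 2 * ⨆ a : Set.Ici (-(k / σ)), ((a : ℝ) + k / σ) ^ 2 * ρstar astar a := by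
  rw [Real.mul_iSup_of_nonneg (sq_nonneg σ)]
  apply csSup_eq_csSup_of_forall_exists_le
  · rintro x ⟨⟨⟨θe, θt⟩, hθ1, hθ2⟩, rfl⟩
    simp only at hθ1 hθ2 ⊢
    by_cases hθt : 0 ≤ θt
    · have hmem : θe / σ ∈ Set.Ici (-(k / σ)) := by
        rw [Set.mem_Ici, show -(k / σ) = -k / σ by ring]
        exact div_le_div_of_nonneg_right (by linarith) hσ.le
      refine ⟨_, ⟨⟨θe / σ, hmem⟩, rfl⟩, ?_⟩
      rw [Rsq_pos_case σ astar hσ δH hδH θe θt hθt]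
      have heq : σ ^ 2 * (θe / σ + k / σ) ^ 2 = (θe + k) ^ 2 := by
        first | (field_simp; ring) | field_simp
      have hsq : θt ^ 2 ≤ (θe + k) ^ 2 := by nlinarith
      have hρ := ρstar_nonneg astar (θe / σ)
      nlinarith [mul_le_mul_of_nonneg_right hsq hρ]
    · have hθe : θe < k := by
        have : θt < 0 := lt_of_not_ge hθt
        linarith
      have hmem : -(θe / σ) ∈ Set.Ici (-(k / σ)) := by
        rw [Set.mem_Ici, neg_le_neg_iff]
        exact div_le_div_of_nonneg_right hθe.le hσ.le
      refine ⟨_, ⟨⟨-(θe / σ), hmem⟩, rfl⟩, ?_⟩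
      rw [Rsq_neg_case σ astar hσ δH hδH θe θt hθt]
      have heq : σ ^ 2 * (-(θe / σ) + k / σ) ^ 2 = (k - θe) ^ 2 := by
        first | (field_simp; ring) | field_simp
      have hθt' : θt < 0 := lt_of_not_ge hθt
      have hsq : θt ^ 2 ≤ (k - θe) ^ 2 := by nlinarith
      have hρ := ρstar_nonneg astar (-(θe / σ))
      nlinarith [mul_le_mul_of_nonneg_right hsq hρ]
  · rintro y ⟨⟨a, haa⟩, rfl⟩
    rw [Set.mem_Ici] at haa
    have hσa : -k ≤ σ * a := by
      have := mul_le_mul_of_nonneg_left haa hσ.le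
      calc -k = σ * (-(k / σ)) := by field_simp
        _ ≤ σ * a := this
    have hmem : (σ * a, σ * a + k) ∈ Θset k := by
      constructor <;> simp <;> linarith
    refine ⟨_, ⟨⟨(σ * a, σ * a + k), hmem⟩, rfl⟩, ?_⟩
    simp only
    rw [Rsq_pos_case σ astar hσ δH hδH (σ * a) (σ * a + k) (by linarith)]
    rw [mul_div_cancel_left₀ a hσ.ne']
    have heq : (σ * a + k) ^ 2 = σ ^ 2 * (a + k / σ) ^ 2 := by
      first | (field_simp; ring) | field_simp
    rw [heq, mul_assoc]
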